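/- Under the assumptions of the previous statement and additionally $\int_\M v\,dx = 0$, one has $m\cdot\nabla J(m) \ge (1-\Lambda\beta_0)|m|^2$ for all $m\in\R^N$, where $\nabla J(m)=m-\Pi(\beta m)(v)$. -/

import Mathlib

open MeasureTheory

open Real
open scoped NNReal ENNReal

set_option linter.unusedSectionVars false
set_option linter.unusedVariables false
set_option maxHeartbeats 1000000

section Aux

variable {M : Type*} [MeasurableSpace M] [TopologicalSpace M] [BorelSpace M] [CompactSpace M]

lemma aux_int (μ : Measure M) [IsFiniteMeasure μ] {f : M → ℝ} (hf : Continuous f) :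
    Integrable f μ :=
  hf.integrable_of_hasCompactSupport (HasCompactSupport.of_compactSpace f)

lemma aux_bdd {f : M → ℝ} (hf : Continuous f) : ∃ C, 0 ≤ C ∧ ∀ x, |f x| ≤ C := by
  obtain ⟨C, hC⟩ := isCompact_univ.exists_bound_of_continuousOn hf.continuousOn
  exact ⟨max C 0, le_max_right _ _, fun x => le_trans (hC x trivial) (le_max_left _ _)⟩

lemma aux_wcont {N : ℕ} {v : M → Fin N → ℝ} (hv : Continuous v) (p : Fin N → ℝ) :
    Continuous fun x => ∑ j, p j * v x j :=
  continuous_finset_sum _ fun j _ => continuous_const.mul ((continuous_apply j).comp hv)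

lemma aux_Zpos (μ : Measure M) [IsFiniteMeasure μ] (hμ : μ Set.univ ≠ 0)
    {u : M → ℝ} (hu : Continuous u) : 0 < ∫ x, Real.exp (u x) ∂μ := by
  obtain ⟨C, _, hC⟩ := aux_bdd hu
  have h1 : ∀ x, Real.exp (-C) ≤ Real.exp (u x) :=
    fun x => Real.exp_le_exp.2 (neg_le_of_abs_le (hC x))
  have h2 : ∫ x, (Real.exp (-C) : ℝ) ∂μ ≤ ∫ x, Real.exp (u x) ∂μ :=
    integral_mono (integrable_const _) (aux_int μ hu.rexp) h1
  have h3 : (0:ℝ) < (μ Set.univ).toReal :=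
    ENNReal.toReal_pos hμ (measure_ne_top μ _)
  calc (0:ℝ) < (μ Set.univ).toReal * Real.exp (-C) := by positivity
    _ = ∫ _x, (Real.exp (-C) : ℝ) ∂μ := by rw [integral_const, smul_eq_mul]; rfl
    _ ≤ _ := h2

lemma aux_deriv (μ : Measure M) [IsFiniteMeasure μ] {w g : M → ℝ}
    (hw : Continuous w) (hg : Continuous g) (t₀ : ℝ) :
    HasDerivAt (fun t => ∫ x, g x * Real.exp (-(t * w x)) ∂μ)
      (∫ x, -(w x * (g x * Real.exp (-(t₀ * w x)))) ∂μ) t₀ := by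
  obtain ⟨Kw, hKw0, hKw⟩ := aux_bdd hw
  obtain ⟨Kg, hKg0, hKg⟩ := aux_bdd hg
  have hce : ∀ t : ℝ, Continuous fun x => g x * Real.exp (-(t * w x)) :=
    fun t => hg.mul ((continuous_const.mul hw).neg.rexp)
  have hce' : Continuous fun x => -(w x * (g x * Real.exp (-(t₀ * w x)))) :=
    ((hw.mul (hce t₀))).neg
  refine (hasDerivAt_integral_of_dominated_loc_of_deriv_le (s := Metric.ball t₀ 1) (Metric.ball_mem_nhds t₀ one_pos)
    (Filter.Eventually.of_forall fun t => (hce t).aestronglyMeasurable)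
    (aux_int μ (hce t₀))
    (F' := fun t x => -(w x * (g x * Real.exp (-(t * w x)))))
    (((hw.mul (hce t₀))).neg.aestronglyMeasurable)
    (bound := fun _ => Kw * (Kg * Real.exp ((|t₀| + 1) * Kw)))
    (Filter.Eventually.of_forall fun x => ?_)
    (integrable_const _)
    (Filter.Eventually.of_forall fun x => ?_)).2
  · intro t ht
    have hu : |t| ≤ |t₀| + 1 := by
      have := mem_ball_iff_norm.mp ht
      have h2 : |t - t₀| < 1 := by simpa [Real.norm_eq_abs] using this
      calc |t| = |t - t₀ + t₀| := by ring_nf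
        _ ≤ |t - t₀| + |t₀| := abs_add_le _ _
        _ ≤ |t₀| + 1 := by linarith
    have hexp : Real.exp (-(t * w x)) ≤ Real.exp ((|t₀| + 1) * Kw) := by
      apply Real.exp_le_exp.2
      calc -(t * w x) ≤ |t * w x| := neg_le_abs _
        _ = |t| * |w x| := abs_mul _ _
        _ ≤ (|t₀| + 1) * Kw := mul_le_mul hu (hKw x) (abs_nonneg _) (by positivity)
    have h1 : ‖-(w x * (g x * Real.exp (-(t * w x))))‖
        = |w x| * (|g x| * Real.exp (-(t * w x))) := by
      rw [Real.norm_eq_abs, abs_neg, abs_mul, abs_mul, abs_of_pos (Real.exp_pos _)]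
    rw [h1]
    have he := Real.exp_pos (-(t * w x))
    have s1 : |g x| * Real.exp (-(t * w x)) ≤ Kg * Real.exp ((|t₀| + 1) * Kw) :=
      mul_le_mul (hKg x) hexp he.le hKg0
    exact mul_le_mul (hKw x) s1 (by positivity) hKw0
  · intro t ht
    have h1 : HasDerivAt (fun u : ℝ => -(u * w x)) (-(1 * w x)) t :=
      ((hasDerivAt_id t).mul_const (w x)).neg
    have h2 := h1.exp
    have h3 := h2.const_mul (g x)
    exact h3.congr_deriv (by ring)

lemma aux_I (μ : Measure M) [IsFiniteMeasure μ] (hμ : μ Set.univ ≠ 0)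
    {N : ℕ} (v : M → Fin N → ℝ) (hv : Continuous v)
    (Z : (Fin N → ℝ) → ℝ)
    (hZ : ∀ m, Z m = ∫ x, Real.exp (-(∑ j, m j * v x j)) ∂μ)
    (Pi' : (Fin N → ℝ) → Measure M)
    (hPi : ∀ m, Pi' m = (ENNReal.ofReal (Z m))⁻¹ •
      μ.withDensity (fun x => ENNReal.ofReal (Real.exp (-(∑ j, m j * v x j)))))
    (p : Fin N → ℝ) (f : M → ℝ) (hf : Continuous f) :
    (∫ x, f x ∂(Pi' p)) = (Z p)⁻¹ * ∫ x, f x * Real.exp (-(∑ j, p j * v x j)) ∂μ := by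
  have hZp : 0 < Z p := by
    rw [hZ]; exact aux_Zpos μ hμ (aux_wcont hv p).neg
  have hmeas : Measurable fun x => Real.toNNReal (Real.exp (-(∑ j, p j * v x j))) :=
    (continuous_real_toNNReal.comp (aux_wcont hv p).neg.rexp).measurable
  have hwd : (μ.withDensity fun x => ENNReal.ofReal (Real.exp (-(∑ j, p j * v x j))))
      = μ.withDensity fun x =>
        ((Real.toNNReal (Real.exp (-(∑ j, p j * v x j))) : ℝ≥0) : ℝ≥0∞) := rfl
  rw [hPi, integral_smul_measure, hwd, integral_withDensity_eq_integral_smul hmeas,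
    ENNReal.toReal_inv, ENNReal.toReal_ofReal hZp.le, smul_eq_mul]
  congr 1
  refine integral_congr_ae (Filter.Eventually.of_forall fun x => ?_)
  simp only [NNReal.smul_def, Real.coe_toNNReal _ (Real.exp_pos _).le, smul_eq_mul]; ring

lemma aux_G (μ : Measure M) [IsFiniteMeasure μ] (hμ : μ Set.univ ≠ 0) {w : M → ℝ}
    (hw : Continuous w) (hw0 : (∫ x, w x ∂μ) = 0) {C β0 β : ℝ} (hC0 : 0 ≤ C)
    (hC : ∀ t : ℝ,
      (∫ x, w x * (w x * Real.exp (-(t * w x))) ∂μ) / (∫ x, Real.exp (-(t * w x)) ∂μ)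
        - ((∫ x, w x * Real.exp (-(t * w x)) ∂μ) / (∫ x, Real.exp (-(t * w x)) ∂μ)) ^ 2 ≤ C)
    (hβ0 : 0 ≤ β0) (hβ : -β0 ≤ β) :
    (∫ x, w x * Real.exp (-(β * w x)) ∂μ) / (∫ x, Real.exp (-(β * w x)) ∂μ) ≤ C * β0 := by
  set Zf : ℝ → ℝ := fun t => ∫ x, Real.exp (-(t * w x)) ∂μ with hZf
  set Af : ℝ → ℝ := fun t => ∫ x, w x * Real.exp (-(t * w x)) ∂μ with hAf
  set Bf : ℝ → ℝ := fun t => ∫ x, w x * (w x * Real.exp (-(t * w x))) ∂μ with hBf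
  show Af β / Zf β ≤ C * β0
  have hCv : ∀ t : ℝ, Bf t / Zf t - (Af t / Zf t) ^ 2 ≤ C := hC
  have hexpc : ∀ t : ℝ, Continuous fun x => Real.exp (-(t * w x)) :=
    fun t => (continuous_const.mul hw).neg.rexp
  have hZfpos : ∀ t, 0 < Zf t := fun t => aux_Zpos μ hμ (continuous_const.mul hw).neg
  have hZ' : ∀ t, HasDerivAt Zf (-(Af t)) t := by
    intro t
    have h := aux_deriv μ hw (continuous_const : Continuous fun _ : M => (1:ℝ)) t
    simp only [one_mul] at h
    rw [integral_neg] at h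
    exact h
  have hA' : ∀ t, HasDerivAt Af (-(Bf t)) t := by
    intro t
    have h := aux_deriv μ hw hw t
    rw [integral_neg] at h
    exact h
  have hG' : ∀ t, HasDerivAt (fun u => Af u / Zf u)
      (-(Bf t / Zf t - (Af t / Zf t) ^ 2)) t := by
    intro t
    have h := (hA' t).div (hZ' t) (hZfpos t).ne'
    have hz : Zf t ≠ 0 := (hZfpos t).ne'
    exact h.congr_deriv (by field_simp; ring)
  have hVpos : ∀ t, 0 ≤ Bf t / Zf t - (Af t / Zf t) ^ 2 := by
    intro t
    set c : ℝ := Af t / Zf t with hc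
    have h0 : 0 ≤ ∫ x, (w x - c) ^ 2 * Real.exp (-(t * w x)) ∂μ :=
      integral_nonneg fun x => mul_nonneg (sq_nonneg _) (Real.exp_pos _).le
    have i1 : Integrable (fun x => w x * (w x * Real.exp (-(t * w x)))) μ :=
      aux_int μ (hw.mul (hw.mul (hexpc t)))
    have i2 : Integrable (fun x => 2 * c * (w x * Real.exp (-(t * w x)))) μ :=
      (aux_int μ (hw.mul (hexpc t))).const_mul _
    have i3 : Integrable (fun x => c ^ 2 * Real.exp (-(t * w x))) μ :=
      (aux_int μ (hexpc t)).const_mul _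
    have hexpand : ∫ x, (w x - c) ^ 2 * Real.exp (-(t * w x)) ∂μ
        = Bf t - 2 * c * Af t + c ^ 2 * Zf t := by
      have heq : (fun x => (w x - c) ^ 2 * Real.exp (-(t * w x)))
          = fun x => w x * (w x * Real.exp (-(t * w x)))
            - 2 * c * (w x * Real.exp (-(t * w x))) + c ^ 2 * Real.exp (-(t * w x)) := by
        funext x; ring
      have i12 : Integrable (fun x => w x * (w x * Real.exp (-(t * w x)))
          - 2 * c * (w x * Real.exp (-(t * w x)))) μ := i1.sub i2
      rw [heq, integral_add i12 i3, integral_sub i1 i2,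
        integral_const_mul, integral_const_mul]
    have hAc : Af t = c * Zf t := by
      rw [hc, div_mul_cancel₀ _ (hZfpos t).ne']
    have h5 : 2 * c * Af t = 2 * c ^ 2 * Zf t := by rw [hAc]; ring
    rw [sub_nonneg, le_div_iff₀ (hZfpos t)]
    linarith [h0, hexpand, h5]
  have hG0 : Af 0 / Zf 0 = 0 := by
    have h1 : Af 0 = ∫ x, w x * Real.exp (-(0 * w x)) ∂μ := rfl
    have h2 : Af 0 = 0 := by
      rw [h1]
      simp only [zero_mul, neg_zero, Real.exp_zero, mul_one]
      exact hw0
    rw [h2, zero_div]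
  have hanti : Antitone (fun u => Af u / Zf u) := by
    apply antitone_of_deriv_nonpos
    · exact fun t => (hG' t).differentiableAt
    · intro t
      rw [(hG' t).deriv]
      exact neg_nonpos.2 (hVpos t)
  rcases le_or_gt 0 β with hb | hb
  · have h : Af β / Zf β ≤ Af 0 / Zf 0 := hanti hb
    rw [hG0] at h
    calc Af β / Zf β ≤ 0 := h
      _ ≤ C * β0 := by positivity
  · have key := norm_image_sub_le_of_norm_deriv_le_segment'
      (f := fun u => Af u / Zf u) (a := β) (b := 0)
      (f' := fun t => -(Bf t / Zf t - (Af t / Zf t) ^ 2)) (C := C)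
      (fun x _ => (hG' x).hasDerivWithinAt)
      (fun x _ => by
        rw [Real.norm_eq_abs, abs_neg, abs_of_nonneg (hVpos x)]
        exact hC x)
      0 ⟨hb.le, le_refl 0⟩
    have key' : ‖Af 0 / Zf 0 - Af β / Zf β‖ ≤ C * (0 - β) := key
    rw [hG0, zero_sub, norm_neg, Real.norm_eq_abs] at key'
    have key := key'
    have h2 : Af β / Zf β ≤ |Af β / Zf β| := le_abs_self _
    have h3 : C * (0 - β) ≤ C * β0 := by nlinarith
    linarith

end Aux

/-- Under the assumptions of Statement 6 and `∫ v dμ = 0`,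
`m ⬝ ∇J(m) ≥ (1 - Λβ₀)|m|²`, where `∇J(m) = m - Π(βm)(v)`. -/
theorem stmt7 {M : Type*} [MeasurableSpace M] [TopologicalSpace M] [BorelSpace M]
    [CompactSpace M] (μ : Measure M) [IsFiniteMeasure μ] (hμ : μ Set.univ ≠ 0)
    {N : ℕ} (v : M → Fin N → ℝ) (hv : Continuous v)
    (hv0 : ∀ i, (∫ x, v x i ∂μ) = 0)
    (Z : (Fin N → ℝ) → ℝ)
    (hZ : ∀ m, Z m = ∫ x, Real.exp (-(∑ j, m j * v x j)) ∂μ)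
    (Pi' : (Fin N → ℝ) → Measure M)
    (hPi : ∀ m, Pi' m = (ENNReal.ofReal (Z m))⁻¹ •
      μ.withDensity (fun x => ENNReal.ofReal (Real.exp (-(∑ j, m j * v x j)))))
    (Λ : ℝ)
    (hΛ : Λ = sSup {r : ℝ | ∃ m x : Fin N → ℝ, (∑ i, x i ^ 2 = 1) ∧
      r = ∑ i, ∑ j, x i * x j *
        ((∫ y, v y i * v y j ∂(Pi' m)) -
          (∫ y, v y i ∂(Pi' m)) * (∫ y, v y j ∂(Pi' m)))})
    (hΛpos : 0 < Λ)
    (β β0 : ℝ) (hβ0 : 0 ≤ β0) (hβ0Λ : β0 < 1 / Λ) (hβ : -β0 ≤ β) :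
    ∀ m : Fin N → ℝ,
      (1 - Λ * β0) * ∑ i, (m i) ^ 2 ≤
        ∑ i, m i * (m i - ∫ x, v x i ∂(Pi' (β • m))) := by

  intro m
  by_cases hm : m = 0
  · subst hm
    simp
  have hspos : 0 < ∑ i, m i ^ 2 := by
    have hex : ∃ i, m i ≠ 0 := by
      by_contra h; push_neg at h; exact hm (funext h)
    obtain ⟨i0, hi0⟩ := hex
    exact Finset.sum_pos' (fun i _ => sq_nonneg _) ⟨i0, Finset.mem_univ _, by positivity⟩
  set s : ℝ := ∑ i, m i ^ 2 with hs
  have hvi : ∀ i, Continuous fun x => v x i := fun i => (continuous_apply i).comp hv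
  set w : M → ℝ := fun x => ∑ j, m j * v x j with hwd
  have hw : Continuous w := aux_wcont hv m
  have hexpc : ∀ t : ℝ, Continuous fun x => Real.exp (-(t * w x)) :=
    fun t => (continuous_const.mul hw).neg.rexp
  have hsm : ∀ (t : ℝ) (x : M), (∑ j, (t • m) j * v x j) = t * w x := by
    intro t x
    simp only [hwd, Pi.smul_apply, smul_eq_mul, Finset.mul_sum, mul_assoc]
  have hlin : ∀ g : M → ℝ, Continuous g →
      (∑ i, m i * ∫ x, v x i * g x ∂μ) = ∫ x, w x * g x ∂μ := by
    intro g hg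
    have h1 : ∀ i, m i * ∫ x, v x i * g x ∂μ = ∫ x, m i * (v x i * g x) ∂μ :=
      fun i => (integral_const_mul _ _).symm
    rw [Finset.sum_congr rfl fun i _ => h1 i,
      ← integral_finset_sum _ (fun i _ => (aux_int μ (f := fun x => m i * (v x i * g x)) (continuous_const.mul ((hvi i).mul hg))))]
    refine integral_congr_ae (Filter.Eventually.of_forall fun x => ?_)
    simp only [hwd, Finset.sum_mul]
    exact Finset.sum_congr rfl fun i _ => by ring
  have hIe : ∀ (t : ℝ) (f : M → ℝ), Continuous f →
      (∫ x, f x ∂(Pi' (t • m)))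
        = (∫ x, Real.exp (-(t * w x)) ∂μ)⁻¹ * ∫ x, f x * Real.exp (-(t * w x)) ∂μ := by
    intro t f hf
    rw [aux_I μ hμ v hv Z hZ Pi' hPi (t • m) f hf, hZ]
    simp_rw [hsm t]
  obtain ⟨Cv, hCv0, hCvn⟩ := aux_bdd (M := M) (f := fun x => ‖v x‖) hv.norm
  have hCvi : ∀ x i, |v x i| ≤ Cv := by
    intro x i
    calc |v x i| = ‖v x i‖ := (Real.norm_eq_abs _).symm
      _ ≤ ‖v x‖ := norm_le_pi_norm (v x) i
      _ = |‖v x‖| := (abs_norm _).symm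
      _ ≤ Cv := hCvn x
  have habs : ∀ (p : Fin N → ℝ) (f : M → ℝ), Continuous f → ∀ Cf : ℝ,
      (∀ y, |f y| ≤ Cf) → |∫ y, f y ∂(Pi' p)| ≤ Cf := by
    intro p f hf Cf hCf
    have hZp : 0 < Z p := by rw [hZ]; exact aux_Zpos μ hμ (aux_wcont hv p).neg
    have hEc : Continuous fun x => Real.exp (-(∑ j, p j * v x j)) := (aux_wcont hv p).neg.rexp
    have h2 : |∫ x, f x * Real.exp (-(∑ j, p j * v x j)) ∂μ| ≤ Cf * Z p := by
      calc |∫ x, f x * Real.exp (-(∑ j, p j * v x j)) ∂μ|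
          ≤ ∫ x, |f x| * Real.exp (-(∑ j, p j * v x j)) ∂μ := by
            simpa [Real.norm_eq_abs, abs_mul, Real.abs_exp] using
              norm_integral_le_integral_norm (μ := μ)
                (fun x => f x * Real.exp (-(∑ j, p j * v x j)))
        _ ≤ ∫ x, Cf * Real.exp (-(∑ j, p j * v x j)) ∂μ := by
            refine integral_mono (aux_int μ (hf.abs.mul hEc)) ((aux_int μ hEc).const_mul _)
              (fun x => ?_)
            exact mul_le_mul_of_nonneg_right (hCf x) (Real.exp_pos _).le
        _ = Cf * Z p := by rw [integral_const_mul, hZ]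
    rw [aux_I μ hμ v hv Z hZ Pi' hPi p f hf, abs_mul, abs_of_pos (inv_pos.2 hZp)]
    calc (Z p)⁻¹ * |∫ x, f x * Real.exp (-(∑ j, p j * v x j)) ∂μ|
        ≤ (Z p)⁻¹ * (Cf * Z p) := mul_le_mul_of_nonneg_left h2 (inv_pos.2 hZp).le
      _ = Cf := by field_simp
  have hbdd : BddAbove {r : ℝ | ∃ m x : Fin N → ℝ, (∑ i, x i ^ 2 = 1) ∧
      r = ∑ i, ∑ j, x i * x j *
        ((∫ y, v y i * v y j ∂(Pi' m)) -
          (∫ y, v y i ∂(Pi' m)) * (∫ y, v y j ∂(Pi' m)))} := by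
    refine ⟨2 * Cv ^ 2 * N, fun r hr => ?_⟩
    obtain ⟨p, y, hy1, rfl⟩ := hr
    have hterm : ∀ i j : Fin N, y i * y j *
        ((∫ z, v z i * v z j ∂(Pi' p)) - (∫ z, v z i ∂(Pi' p)) * (∫ z, v z j ∂(Pi' p)))
        ≤ |y i| * |y j| * (2 * Cv ^ 2) := by
      intro i j
      have h1 : |∫ z, v z i * v z j ∂(Pi' p)| ≤ Cv ^ 2 := by
        refine habs p (fun z => v z i * v z j) ((hvi i).mul (hvi j)) _ (fun z => ?_)
        rw [abs_mul]
        calc |v z i| * |v z j| ≤ Cv * Cv :=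
              mul_le_mul (hCvi z i) (hCvi z j) (abs_nonneg _) hCv0
          _ = Cv ^ 2 := (sq Cv).symm
      have h2 : |∫ z, v z i ∂(Pi' p)| ≤ Cv := habs p _ (hvi i) _ (fun z => hCvi z i)
      have h3 : |∫ z, v z j ∂(Pi' p)| ≤ Cv := habs p _ (hvi j) _ (fun z => hCvi z j)
      have h4 : |(∫ z, v z i ∂(Pi' p)) * (∫ z, v z j ∂(Pi' p))| ≤ Cv ^ 2 := by
        rw [abs_mul]
        calc |∫ z, v z i ∂(Pi' p)| * |∫ z, v z j ∂(Pi' p)| ≤ Cv * Cv :=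
              mul_le_mul h2 h3 (abs_nonneg _) hCv0
          _ = Cv ^ 2 := (sq Cv).symm
      have hD : |(∫ z, v z i * v z j ∂(Pi' p))
          - (∫ z, v z i ∂(Pi' p)) * (∫ z, v z j ∂(Pi' p))| ≤ 2 * Cv ^ 2 := by
        calc |(∫ z, v z i * v z j ∂(Pi' p))
            - (∫ z, v z i ∂(Pi' p)) * (∫ z, v z j ∂(Pi' p))|
            = |(∫ z, v z i * v z j ∂(Pi' p))
              + -((∫ z, v z i ∂(Pi' p)) * (∫ z, v z j ∂(Pi' p)))| := by rw [sub_eq_add_neg]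
          _ ≤ |∫ z, v z i * v z j ∂(Pi' p)|
              + |-((∫ z, v z i ∂(Pi' p)) * (∫ z, v z j ∂(Pi' p)))| := abs_add_le _ _
          _ = |∫ z, v z i * v z j ∂(Pi' p)|
              + |(∫ z, v z i ∂(Pi' p)) * (∫ z, v z j ∂(Pi' p))| := by rw [abs_neg]
          _ ≤ Cv ^ 2 + Cv ^ 2 := add_le_add h1 h4
          _ = 2 * Cv ^ 2 := by ring
      calc y i * y j * ((∫ z, v z i * v z j ∂(Pi' p))
            - (∫ z, v z i ∂(Pi' p)) * (∫ z, v z j ∂(Pi' p)))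
          ≤ |y i * y j * ((∫ z, v z i * v z j ∂(Pi' p))
            - (∫ z, v z i ∂(Pi' p)) * (∫ z, v z j ∂(Pi' p)))| := le_abs_self _
        _ = |y i| * |y j| * |(∫ z, v z i * v z j ∂(Pi' p))
            - (∫ z, v z i ∂(Pi' p)) * (∫ z, v z j ∂(Pi' p))| := by rw [abs_mul, abs_mul]
        _ ≤ |y i| * |y j| * (2 * Cv ^ 2) :=
            mul_le_mul_of_nonneg_left hD (mul_nonneg (abs_nonneg _) (abs_nonneg _))
    calc (∑ i, ∑ j, y i * y j *
          ((∫ z, v z i * v z j ∂(Pi' p)) - (∫ z, v z i ∂(Pi' p)) * (∫ z, v z j ∂(Pi' p))))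
        ≤ ∑ i, ∑ j, |y i| * |y j| * (2 * Cv ^ 2) :=
          Finset.sum_le_sum fun i _ => Finset.sum_le_sum fun j _ => hterm i j
      _ = (∑ i, |y i|) ^ 2 * (2 * Cv ^ 2) := by
          rw [show ((∑ i, |y i|) ^ 2 : ℝ) = (∑ i, |y i|) * ∑ i, |y i| from sq _,
            Finset.sum_mul_sum]
          simp only [Finset.sum_mul]
      _ ≤ ((N : ℝ) * ∑ i, y i ^ 2) * (2 * Cv ^ 2) := by
          refine mul_le_mul_of_nonneg_right ?_ (by positivity)
          have hcs := Finset.sum_mul_sq_le_sq_mul_sq Finset.univ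
            (fun _ : Fin N => (1 : ℝ)) (fun i => |y i|)
          simpa [sq_abs] using hcs
      _ = 2 * Cv ^ 2 * N := by rw [hy1]; ring
  have hdbl : ∀ g : M → ℝ, Continuous g →
      (∑ i, ∑ j, m i * m j * ∫ x, (v x i * v x j) * g x ∂μ)
        = ∫ x, (w x * w x) * g x ∂μ := by
    intro g hg
    have inner : ∀ i, (∑ j, m i * m j * ∫ x, (v x i * v x j) * g x ∂μ)
        = m i * ∫ x, v x i * (w x * g x) ∂μ := by
      intro i
      have e1 : ∀ j, m i * m j * ∫ x, (v x i * v x j) * g x ∂μ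
          = m i * (m j * ∫ x, v x j * (v x i * g x) ∂μ) := by
        intro j
        have e2 : (fun x => (v x i * v x j) * g x) = fun x => v x j * (v x i * g x) := by
          funext x; ring
        rw [show (∫ x, (v x i * v x j) * g x ∂μ) = ∫ x, v x j * (v x i * g x) ∂μ from by rw [e2]]
        ring
      rw [Finset.sum_congr rfl fun j _ => e1 j, ← Finset.mul_sum,
        hlin (fun x => v x i * g x) ((hvi i).mul hg)]
      congr 1
      refine integral_congr_ae (Filter.Eventually.of_forall fun x => ?_)
      ring
    rw [Finset.sum_congr rfl fun i _ => inner i, hlin (fun x => w x * g x) (hw.mul hg)]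
    refine integral_congr_ae (Filter.Eventually.of_forall fun x => ?_)
    ring
  have hVle : ∀ t : ℝ,
      (∫ x, w x * (w x * Real.exp (-(t * w x))) ∂μ) / (∫ x, Real.exp (-(t * w x)) ∂μ)
        - ((∫ x, w x * Real.exp (-(t * w x)) ∂μ) / (∫ x, Real.exp (-(t * w x)) ∂μ)) ^ 2
        ≤ Λ * s := by
    intro t
    have hZt : 0 < ∫ x, Real.exp (-(t * w x)) ∂μ :=
      aux_Zpos μ hμ (continuous_const.mul hw).neg
    have hIi : ∀ i, (∫ y, v y i ∂(Pi' (t • m)))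
        = (∫ x, Real.exp (-(t * w x)) ∂μ)⁻¹ * ∫ x, v x i * Real.exp (-(t * w x)) ∂μ :=
      fun i => hIe t _ (hvi i)
    have hIij : ∀ i j, (∫ y, v y i * v y j ∂(Pi' (t • m)))
        = (∫ x, Real.exp (-(t * w x)) ∂μ)⁻¹
          * ∫ x, (v x i * v x j) * Real.exp (-(t * w x)) ∂μ :=
      fun i j => hIe t _ ((hvi i).mul (hvi j))
    have hone : (∑ i, m i * ((∫ x, Real.exp (-(t * w x)) ∂μ)⁻¹
          * ∫ x, v x i * Real.exp (-(t * w x)) ∂μ))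
        = (∫ x, Real.exp (-(t * w x)) ∂μ)⁻¹ * ∫ x, w x * Real.exp (-(t * w x)) ∂μ := by
      rw [← hlin _ (hexpc t), Finset.mul_sum]
      exact Finset.sum_congr rfl fun i _ => by ring
    have hD : (∑ i, ∑ j, m i * m j *
        ((∫ y, v y i * v y j ∂(Pi' (t • m))) -
          (∫ y, v y i ∂(Pi' (t • m))) * (∫ y, v y j ∂(Pi' (t • m)))))
        = (∫ x, w x * (w x * Real.exp (-(t * w x))) ∂μ) / (∫ x, Real.exp (-(t * w x)) ∂μ)
          - ((∫ x, w x * Real.exp (-(t * w x)) ∂μ)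
              / (∫ x, Real.exp (-(t * w x)) ∂μ)) ^ 2 := by
      simp only [hIij, hIi]
      calc (∑ i, ∑ j, m i * m j *
            ((∫ x, Real.exp (-(t * w x)) ∂μ)⁻¹
                * (∫ x, (v x i * v x j) * Real.exp (-(t * w x)) ∂μ)
              - ((∫ x, Real.exp (-(t * w x)) ∂μ)⁻¹
                  * ∫ x, v x i * Real.exp (-(t * w x)) ∂μ)
                * ((∫ x, Real.exp (-(t * w x)) ∂μ)⁻¹
                  * ∫ x, v x j * Real.exp (-(t * w x)) ∂μ)))
          = (∑ i, ∑ j, (∫ x, Real.exp (-(t * w x)) ∂μ)⁻¹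
              * (m i * m j * ∫ x, (v x i * v x j) * Real.exp (-(t * w x)) ∂μ))
            - ∑ i, ∑ j,
              (m i * ((∫ x, Real.exp (-(t * w x)) ∂μ)⁻¹
                * ∫ x, v x i * Real.exp (-(t * w x)) ∂μ))
              * (m j * ((∫ x, Real.exp (-(t * w x)) ∂μ)⁻¹
                * ∫ x, v x j * Real.exp (-(t * w x)) ∂μ)) := by
            rw [← Finset.sum_sub_distrib]
            refine Finset.sum_congr rfl fun i _ => ?_
            rw [← Finset.sum_sub_distrib]
            refine Finset.sum_congr rfl fun j _ => ?_
            ring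
        _ = (∫ x, Real.exp (-(t * w x)) ∂μ)⁻¹
              * (∑ i, ∑ j, m i * m j * ∫ x, (v x i * v x j) * Real.exp (-(t * w x)) ∂μ)
            - (∑ i, m i * ((∫ x, Real.exp (-(t * w x)) ∂μ)⁻¹
                * ∫ x, v x i * Real.exp (-(t * w x)) ∂μ))
              * (∑ j, m j * ((∫ x, Real.exp (-(t * w x)) ∂μ)⁻¹
                * ∫ x, v x j * Real.exp (-(t * w x)) ∂μ)) := by
            rw [← Finset.sum_mul_sum]
            congr 1
            simp only [← Finset.mul_sum]
        _ = (∫ x, Real.exp (-(t * w x)) ∂μ)⁻¹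
              * ∫ x, (w x * w x) * Real.exp (-(t * w x)) ∂μ
            - ((∫ x, Real.exp (-(t * w x)) ∂μ)⁻¹
                * ∫ x, w x * Real.exp (-(t * w x)) ∂μ)
              * ((∫ x, Real.exp (-(t * w x)) ∂μ)⁻¹
                * ∫ x, w x * Real.exp (-(t * w x)) ∂μ) := by
            rw [hdbl _ (hexpc t), hone]
        _ = (∫ x, w x * (w x * Real.exp (-(t * w x))) ∂μ)
              / (∫ x, Real.exp (-(t * w x)) ∂μ)
            - ((∫ x, w x * Real.exp (-(t * w x)) ∂μ)
                / (∫ x, Real.exp (-(t * w x)) ∂μ)) ^ 2 := by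
            rw [show (∫ x, (w x * w x) * Real.exp (-(t * w x)) ∂μ)
                = ∫ x, w x * (w x * Real.exp (-(t * w x))) ∂μ from
              integral_congr_ae (Filter.Eventually.of_forall fun x => by ring),
              sq, div_eq_inv_mul, div_eq_inv_mul]
    have hσpos : 0 < Real.sqrt s := Real.sqrt_pos.2 hspos
    have hσ : Real.sqrt s * Real.sqrt s = s := Real.mul_self_sqrt hspos.le
    have hx1 : ∑ i, (m i / Real.sqrt s) ^ 2 = 1 := by
      have : ∀ i, (m i / Real.sqrt s) ^ 2 = m i ^ 2 / s := by
        intro i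
        rw [div_pow, sq (Real.sqrt s), hσ]
      rw [Finset.sum_congr rfl fun i _ => this i, ← Finset.sum_div, ← hs,
        div_self hspos.ne']
    have hmem : (∑ i, ∑ j, (m i / Real.sqrt s) * (m j / Real.sqrt s) *
        ((∫ y, v y i * v y j ∂(Pi' (t • m))) -
          (∫ y, v y i ∂(Pi' (t • m))) * (∫ y, v y j ∂(Pi' (t • m)))))
        ∈ {r : ℝ | ∃ p x : Fin N → ℝ, (∑ i, x i ^ 2 = 1) ∧
          r = ∑ i, ∑ j, x i * x j *
            ((∫ y, v y i * v y j ∂(Pi' p)) -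
              (∫ y, v y i ∂(Pi' p)) * (∫ y, v y j ∂(Pi' p)))} :=
      ⟨t • m, fun i => m i / Real.sqrt s, hx1, rfl⟩
    have hrle : (∑ i, ∑ j, (m i / Real.sqrt s) * (m j / Real.sqrt s) *
        ((∫ y, v y i * v y j ∂(Pi' (t • m))) -
          (∫ y, v y i ∂(Pi' (t • m))) * (∫ y, v y j ∂(Pi' (t • m))))) ≤ Λ := by
      rw [hΛ]
      exact le_csSup hbdd hmem
    have hscale : (∑ i, ∑ j, m i * m j *
        ((∫ y, v y i * v y j ∂(Pi' (t • m))) -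
          (∫ y, v y i ∂(Pi' (t • m))) * (∫ y, v y j ∂(Pi' (t • m)))))
        = s * ∑ i, ∑ j, (m i / Real.sqrt s) * (m j / Real.sqrt s) *
          ((∫ y, v y i * v y j ∂(Pi' (t • m))) -
            (∫ y, v y i ∂(Pi' (t • m))) * (∫ y, v y j ∂(Pi' (t • m)))) := by
      rw [Finset.mul_sum]
      refine Finset.sum_congr rfl fun i _ => ?_
      rw [Finset.mul_sum]
      refine Finset.sum_congr rfl fun j _ => ?_
      rw [div_mul_div_comm, hσ]
      field_simp
    rw [← hD, hscale]
    calc s * (∑ i, ∑ j, (m i / Real.sqrt s) * (m j / Real.sqrt s) *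
          ((∫ y, v y i * v y j ∂(Pi' (t • m))) -
            (∫ y, v y i ∂(Pi' (t • m))) * (∫ y, v y j ∂(Pi' (t • m)))))
        ≤ s * Λ := mul_le_mul_of_nonneg_left hrle hspos.le
      _ = Λ * s := mul_comm _ _
  have hw0 : (∫ x, w x ∂μ) = 0 := by
    have h := hlin (fun _ => (1 : ℝ)) continuous_const
    simp only [mul_one] at h
    rw [← h]
    exact Finset.sum_eq_zero fun i _ => by rw [hv0 i, mul_zero]
  have hkey := aux_G μ hμ hw hw0 (C := Λ * s) (mul_nonneg hΛpos.le hspos.le) hVle hβ0 hβ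
  have hGβ : (∑ i, m i * ∫ x, v x i ∂(Pi' (β • m)))
      = (∫ x, w x * Real.exp (-(β * w x)) ∂μ) / (∫ x, Real.exp (-(β * w x)) ∂μ) := by
    rw [Finset.sum_congr rfl fun i _ => by rw [hIe β _ (hvi i)]]
    have hone : (∑ i, m i * ((∫ x, Real.exp (-(β * w x)) ∂μ)⁻¹
          * ∫ x, v x i * Real.exp (-(β * w x)) ∂μ))
        = (∫ x, Real.exp (-(β * w x)) ∂μ)⁻¹ * ∫ x, w x * Real.exp (-(β * w x)) ∂μ := by
      rw [← hlin _ (hexpc β), Finset.mul_sum]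
      exact Finset.sum_congr rfl fun i _ => by ring
    rw [hone, div_eq_inv_mul]
  have hsplit : (∑ i, m i * (m i - ∫ x, v x i ∂(Pi' (β • m))))
      = s - ∑ i, m i * ∫ x, v x i ∂(Pi' (β • m)) := by
    rw [hs, ← Finset.sum_sub_distrib]
    exact Finset.sum_congr rfl fun i _ => by ring
  rw [hsplit, hGβ]
  have hring : (1 - Λ * β0) * s = s - Λ * s * β0 := by ring
  linarith [hkey]
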